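/- Let x₀ ∈ ℝ and let u be seven times continuously differentiable on a neighborhood of x₀. Then, as h → 0⁺, (7/(9h))·(u(x₀+h) − u(x₀−h)) + (1/(36h))·(u(x₀+2h) − u(x₀−2h)) − (1/3)·(u'(x₀−h) + u'(x₀+h)) − u'(x₀) = (h⁶/1260)·u⁽⁷⁾(x₀) + o(h⁶). -/

import Mathlib

open Filter Topology Asymptotics
open scoped Nat

theorem taylor_peano (n : ℕ) (f : ℝ → ℝ) (x₀ : ℝ) (hf : ContDiffAt ℝ (n+1) f x₀) :
    (fun y => f y - ∑ k ∈ Finset.range (n+2), (y - x₀)^k / (k ! : ℝ) * iteratedDeriv k f x₀)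
      =o[𝓝 x₀] fun y => (y - x₀)^(n+1) := by
  induction n generalizing f with
  | zero =>
    have h1 : HasDerivAt f (deriv f x₀) x₀ :=
      (hf.differentiableAt (by norm_num)).hasDerivAt
    rw [hasDerivAt_iff_isLittleO] at h1
    exact h1.congr' (Eventually.of_forall fun y => by
        show f y - f x₀ - (y - x₀) • deriv f x₀ =
          f y - ∑ k ∈ Finset.range 2, (y - x₀)^k / (k ! : ℝ) * iteratedDeriv k f x₀
        simp [Finset.sum_range_succ]
        ring) (Eventually.of_forall fun y => by show y - x₀ = (y - x₀)^1; simp)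
  | succ n ih =>
    obtain ⟨t, ht, hts⟩ := hf.contDiffOn le_rfl (by simp)
    obtain ⟨r, hr0, hrt⟩ := Metric.mem_nhds_iff.1 ht
    have hball : ContDiffOn ℝ (n+1+1) f (Metric.ball x₀ r) := hts.mono hrt
    have hmem : Metric.ball x₀ r ∈ 𝓝 x₀ := Metric.ball_mem_nhds x₀ hr0
    set d := deriv f with hd
    have hdOn : ContDiffOn ℝ (n+1) d (Metric.ball x₀ r) :=
      hball.deriv_of_isOpen Metric.isOpen_ball (by exact_mod_cast le_rfl)
    have IH := ih d (hdOn.contDiffAt hmem)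
    set S : ℝ → ℝ := fun y => ∑ k ∈ Finset.range (n+2),
      (y - x₀)^k / (k ! : ℝ) * iteratedDeriv k d x₀ with hS
    set g : ℝ → ℝ := fun y => f y - ∑ k ∈ Finset.range (n+3),
      (y - x₀)^k / (k ! : ℝ) * iteratedDeriv k f x₀ with hg
    have hg0 : g x₀ = 0 := by
      simp only [hg, Finset.sum_range_succ', sub_self]
      simp
    have hg' : ∀ y ∈ Metric.ball x₀ r, HasDerivAt g (d y - S y) y := by
      intro y hy
      have h1 : HasDerivAt f (d y) y :=
        ((hball.differentiableOn (by exact_mod_cast not_false)).differentiableAt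
          (Metric.isOpen_ball.mem_nhds hy)).hasDerivAt
      have h2 : HasDerivAt (fun y => ∑ k ∈ Finset.range (n+3),
          (y - x₀)^k / (k ! : ℝ) * iteratedDeriv k f x₀) (S y) y := by
        have hterm : ∀ k ∈ Finset.range (n+3),
            HasDerivAt (fun y => (y - x₀)^k / (k ! : ℝ) * iteratedDeriv k f x₀)
              ((k * (y - x₀)^(k-1) * 1) / (k ! : ℝ) * iteratedDeriv k f x₀) y :=
          fun k _ => ((((hasDerivAt_id y).sub_const x₀).pow k).div_const _).mul_const _
        have hsum := HasDerivAt.fun_sum hterm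
        refine hsum.congr_deriv (Eq.symm ?_)
        rw [hS, Finset.sum_range_succ']
        simp only [Nat.cast_zero, zero_mul, mul_one, zero_div, Nat.factorial_zero, pow_zero]
        rw [add_zero]  -- maybe term 0 is 0
        refine Finset.sum_congr rfl fun i _ => ?_
        rw [iteratedDeriv_succ', Nat.factorial_succ]
        have h1 : ((i:ℝ)+1) ≠ 0 := by positivity
        have h2 : ((i ! : ℕ) : ℝ) ≠ 0 := by positivity
        push_cast
        field_simp
        ring
      exact h1.sub h2
    rw [isLittleO_iff]
    intro ε hε
    have hcomb : ∀ᶠ y in 𝓝 x₀, y ∈ Metric.ball x₀ r ∧ ‖d y - S y‖ ≤ ε * ‖(y - x₀)^(n+1)‖ :=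
      (Metric.isOpen_ball.eventually_mem (Metric.mem_ball_self hr0)).and (isLittleO_iff.1 IH hε)
    obtain ⟨δ, hδ0, hδ⟩ := Metric.eventually_nhds_iff.1 hcomb
    rw [Metric.eventually_nhds_iff]
    refine ⟨δ, hδ0, fun y hy => ?_⟩
    have hsub : ∀ t ∈ Metric.closedBall x₀ (dist y x₀), dist t x₀ < δ :=
      fun t ht => lt_of_le_of_lt (Metric.mem_closedBall.1 ht) hy
    have hC : ∀ t ∈ Metric.closedBall x₀ (dist y x₀),
        ‖d t - S t‖ ≤ ε * ‖(y - x₀)^(n+1)‖ := by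
      intro t ht
      refine le_trans (hδ (hsub t ht)).2 ?_
      have habs : |t - x₀| ≤ |y - x₀| := by
        simpa [Real.dist_eq] using Metric.mem_closedBall.1 ht
      have : ‖(t - x₀)^(n+1)‖ ≤ ‖(y - x₀)^(n+1)‖ := by
        simp only [Real.norm_eq_abs, abs_pow]
        exact pow_le_pow_left₀ (abs_nonneg _) habs _
      exact mul_le_mul_of_nonneg_left this hε.le
    have hmv := Convex.norm_image_sub_le_of_norm_hasDerivWithin_le
      (f := g) (f' := fun t => d t - S t)
      (fun t ht => ((hg' t (hδ (hsub t ht)).1).hasDerivWithinAt)) hC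
      (convex_closedBall _ _) (Metric.mem_closedBall_self dist_nonneg)
      (Metric.mem_closedBall.2 le_rfl)
    rw [hg0, sub_zero] at hmv
    calc ‖g y‖ ≤ ε * ‖(y - x₀)^(n+1)‖ * ‖y - x₀‖ := hmv
    _ = ε * ‖(y - x₀)^(n+2)‖ := by
        simp only [Real.norm_eq_abs, abs_pow]
        ring

set_option maxHeartbeats 2000000 in
/-- Leading-order truncation error of the sixth-order compact FD scheme for
the first derivative. -/
theorem compact_fd6_first_deriv_lte (x₀ : ℝ) (u : ℝ → ℝ)
    (s : Set ℝ) (hs : s ∈ 𝓝 x₀) (hu : ContDiffOn ℝ 7 u s) :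
    (fun h : ℝ =>
        7 / (9 * h) * (u (x₀ + h) - u (x₀ - h)) +
        1 / (36 * h) * (u (x₀ + 2 * h) - u (x₀ - 2 * h)) -
        1 / 3 * (deriv u (x₀ - h) + deriv u (x₀ + h)) -
        deriv u x₀ -
        h ^ 6 / 1260 * iteratedDeriv 7 u x₀)
      =o[𝓝[>] 0] fun h : ℝ => h ^ 6 := by
  obtain ⟨r, hr0, hrs⟩ := Metric.mem_nhds_iff.1 hs
  have hball : ContDiffOn ℝ 7 u (Metric.ball x₀ r) := hu.mono hrs
  have hmem : Metric.ball x₀ r ∈ 𝓝 x₀ := Metric.ball_mem_nhds x₀ hr0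
  have huAt : ContDiffAt ℝ ((6:ℕ)+1) u x₀ := by
    have := hball.contDiffAt hmem
    norm_num at this ⊢; exact_mod_cast this
  have hdAt : ContDiffAt ℝ ((5:ℕ)+1) (deriv u) x₀ := by
    have h6 : ContDiffOn ℝ 6 (deriv u) (Metric.ball x₀ r) :=
      hball.deriv_of_isOpen Metric.isOpen_ball (by norm_num)
    have := h6.contDiffAt hmem
    norm_num at this ⊢; exact_mod_cast this
  have htend : ∀ c : ℝ, Tendsto (fun h : ℝ => x₀ + c * h) (𝓝[>] 0) (𝓝 x₀) := by
    intro c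
    have h1 : Tendsto (fun h : ℝ => x₀ + c * h) (𝓝 0) (𝓝 (x₀ + c * 0)) :=
      (continuous_const.add (continuous_const.mul continuous_id)).tendsto 0
    simpa using h1.mono_left nhdsWithin_le_nhds
  -- E part
  have hE : ∀ c : ℝ, (fun h : ℝ => u (x₀ + c*h) -
      ∑ k ∈ Finset.range 8, (c*h)^k / (k ! : ℝ) * iteratedDeriv k u x₀)
      =o[𝓝[>] (0:ℝ)] fun h => h^7 := by
    intro c
    have h1 := (taylor_peano 6 u x₀ huAt).comp_tendsto (htend c)
    have h2 : (fun h : ℝ => u (x₀ + c*h) -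
        ∑ k ∈ Finset.range 8, (c*h)^k / (k ! : ℝ) * iteratedDeriv k u x₀)
        =o[𝓝[>] (0:ℝ)] fun h => ((x₀ + c*h) - x₀)^7 := by
      simpa [Function.comp_def, add_sub_cancel_left] using h1
    refine h2.trans_isBigO ?_
    have : (fun h : ℝ => (c*h)^7) =O[𝓝[>] (0:ℝ)] fun h => h^7 := by
      simpa [mul_pow] using (isBigO_refl (fun h : ℝ => h^7) (𝓝[>] (0:ℝ))).const_mul_left (c^7)
    simpa [add_sub_cancel_left] using this
  have hF : ∀ c : ℝ, (fun h : ℝ => deriv u (x₀ + c*h) -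
      ∑ k ∈ Finset.range 7, (c*h)^k / (k ! : ℝ) * iteratedDeriv k (deriv u) x₀)
      =o[𝓝[>] (0:ℝ)] fun h => h^6 := by
    intro c
    have h1 := (taylor_peano 5 (deriv u) x₀ hdAt).comp_tendsto (htend c)
    have h2 : (fun h : ℝ => deriv u (x₀ + c*h) -
        ∑ k ∈ Finset.range 7, (c*h)^k / (k ! : ℝ) * iteratedDeriv k (deriv u) x₀)
        =o[𝓝[>] (0:ℝ)] fun h => ((x₀ + c*h) - x₀)^6 := by
      simpa [Function.comp_def, add_sub_cancel_left] using h1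
    refine h2.trans_isBigO ?_
    have : (fun h : ℝ => (c*h)^6) =O[𝓝[>] (0:ℝ)] fun h => h^6 := by
      simpa [mul_pow] using (isBigO_refl (fun h : ℝ => h^6) (𝓝[>] (0:ℝ))).const_mul_left (c^6)
    simpa [add_sub_cancel_left] using this
  have hinv : ∀ a b : ℝ, (fun h : ℝ => a / (b * h)) =O[𝓝[>] (0:ℝ)] fun h => h⁻¹ := by
    intro a b
    refine IsBigO.of_bound (|a|/|b|) (Eventually.of_forall fun h => le_of_eq ?_)
    rw [Real.norm_eq_abs, Real.norm_eq_abs, abs_div, abs_mul, abs_inv]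
    ring
  have heq : (fun h : ℝ => h⁻¹ * h^7) =ᶠ[𝓝[>] (0:ℝ)] fun h => h^6 := by
    filter_upwards [self_mem_nhdsWithin] with h hh
    have hne : (h:ℝ) ≠ 0 := ne_of_gt hh
    field_simp
  have O1 : (fun h : ℝ => 7 / (9*h) *
      ((u (x₀ + 1*h) - ∑ k ∈ Finset.range 8, (1*h)^k / (k ! : ℝ) * iteratedDeriv k u x₀) -
       (u (x₀ + (-1)*h) - ∑ k ∈ Finset.range 8, ((-1)*h)^k / (k ! : ℝ) * iteratedDeriv k u x₀)))
      =o[𝓝[>] (0:ℝ)] fun h => h^6 :=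
    ((hinv 7 9).mul_isLittleO ((hE 1).sub (hE (-1)))).congr' (EventuallyEq.refl _ _) heq
  have O2 : (fun h : ℝ => 1 / (36*h) *
      ((u (x₀ + 2*h) - ∑ k ∈ Finset.range 8, (2*h)^k / (k ! : ℝ) * iteratedDeriv k u x₀) -
       (u (x₀ + (-2)*h) - ∑ k ∈ Finset.range 8, ((-2)*h)^k / (k ! : ℝ) * iteratedDeriv k u x₀)))
      =o[𝓝[>] (0:ℝ)] fun h => h^6 :=
    ((hinv 1 36).mul_isLittleO ((hE 2).sub (hE (-2)))).congr' (EventuallyEq.refl _ _) heq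
  have O3 : (fun h : ℝ => 1/3 *
      ((deriv u (x₀ + (-1)*h) - ∑ k ∈ Finset.range 7, ((-1)*h)^k / (k ! : ℝ) * iteratedDeriv k (deriv u) x₀) +
       (deriv u (x₀ + 1*h) - ∑ k ∈ Finset.range 7, (1*h)^k / (k ! : ℝ) * iteratedDeriv k (deriv u) x₀)))
      =o[𝓝[>] (0:ℝ)] fun h => h^6 :=
    ((hF (-1)).add (hF 1)).const_mul_left (1/3)
  have total := (O1.add O2).sub O3
  refine total.congr' ?_ (EventuallyEq.refl _ _)
  filter_upwards [self_mem_nhdsWithin] with h hh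
  have hne : (h:ℝ) ≠ 0 := ne_of_gt hh
  rw [show x₀ + 1*h = x₀ + h by ring, show x₀ + (-1)*h = x₀ - h by ring,
    show x₀ + (-2)*h = x₀ - 2*h by ring]
  simp only [Finset.sum_range_succ, Finset.sum_range_zero, iteratedDeriv_zero, iteratedDeriv_one,
    ← iteratedDeriv_succ']
  norm_num [Nat.factorial]
  field_simp
  ring
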